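/- arXiv:1403.6887 — 8 statements merged into one kernel-verified Lean document; each statement's English description precedes it below -/
import Mathlib

section
/- For any positive integer T, (1/T^2) * Σ_{k=1}^{T} ((k-1)/(T-k+1)) * (2T+1-2k) = 1 - (1/T) * Σ_{k=1}^{T} (1/k). -/
open Finset

theorem stmt_0 (T : ℕ) (hT : 0 < T) :
    (1 / (T : ℝ) ^ 2) *
      ∑ k ∈ Finset.Icc 1 T, (((k : ℝ) - 1) / ((T : ℝ) - k + 1)) * (2 * (T : ℝ) + 1 - 2 * k)
    = 1 - (1 / (T : ℝ)) * ∑ k ∈ Finset.Icc 1 T, (1 : ℝ) / k := by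
  have hT0 : (T : ℝ) ≠ 0 := by positivity
  have hrefl : ∑ k ∈ Finset.Icc 1 T, (((k : ℝ) - 1) / ((T : ℝ) - k + 1)) * (2 * (T : ℝ) + 1 - 2 * k)
      = ∑ k ∈ Finset.Icc 1 T, (((T : ℝ) - k) / k) * (2 * (k : ℝ) - 1) := by
    apply Finset.sum_nbij' (i := fun k => T + 1 - k) (j := fun k => T + 1 - k)
    · intro k hk
      simp only [Finset.mem_Icc] at *
      omega
    · intro k hk
      simp only [Finset.mem_Icc] at *
      omega
    · intro k hk
      simp only [Finset.mem_Icc] at hk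
      omega
    · intro k hk
      simp only [Finset.mem_Icc] at hk
      omega
    · intro k hk
      simp only [Finset.mem_Icc] at hk
      have h1 : ((T + 1 - k : ℕ) : ℝ) = (T : ℝ) + 1 - k := by
        have : k ≤ T + 1 := by omega
        push_cast [Nat.cast_sub this]
        ring
      rw [h1]; ring_nf
  rw [hrefl]
  have hterm : ∀ k ∈ Finset.Icc 1 T, (((T : ℝ) - k) / k) * (2 * (k : ℝ) - 1)
      = (2 * (T : ℝ) + 1 - 2 * k) - (T : ℝ) * (1 / k) := by
    intro k hk
    simp only [Finset.mem_Icc] at hk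
    have hk0 : (k : ℝ) ≠ 0 := by
      have : 0 < k := hk.1
      positivity
    field_simp
    ring
  rw [Finset.sum_congr rfl hterm, Finset.sum_sub_distrib, ← Finset.mul_sum]
  have hgauss : ∑ k ∈ Finset.Icc 1 T, (k : ℝ) = (T : ℝ) * (T + 1) / 2 := by
    have := Finset.sum_range_id_mul_two (T + 1)
    have h2 : ∑ k ∈ Finset.Icc 1 T, k = ∑ k ∈ Finset.range (T + 1), k := by
      rw [Finset.range_eq_Ico]
      rw [Finset.sum_Ico_eq_sum_range]
      rw [← Finset.Ico_add_one_right_eq_Icc]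
      rw [Finset.sum_Ico_eq_sum_range]
      simp only [Nat.succ_sub_one, Nat.sub_zero, zero_add]
      rw [Finset.sum_range_succ']
      simp [add_comm]
    have h3 : ((∑ k ∈ Finset.Icc 1 T, k : ℕ) : ℝ) * 2 = (T : ℝ) * (T + 1) := by
      rw [h2]
      exact_mod_cast congrArg (Nat.cast : ℕ → ℝ) (this.trans (by push_cast; ring_nf))
    push_cast at h3
    linarith
  have hsum1 : ∑ k ∈ Finset.Icc 1 T, (2 * (T : ℝ) + 1 - 2 * k)
      = (T : ℝ) ^ 2 := by
    have hcard : (Finset.Icc 1 T).card = T := by simp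
    rw [Finset.sum_sub_distrib, Finset.sum_add_distrib]
    simp only [Finset.sum_const, hcard, nsmul_eq_mul, ← Finset.mul_sum, hgauss]
    ring
  rw [hsum1]
  field_simp
end

section
/- Let T ≥ 1 and define the T×T real matrix B by B_{tτ} = (τ-1)/(T(T-τ+1)) if τ ≤ t and B_{tτ} = -1/T if τ > t (indices from 1 to T). Then trace(B Bᵀ) = Σ_{k=2}^{T} 1/k. -/
open Finset Matrix

theorem stmt_1 (T : ℕ) (hT : 1 ≤ T)
    (B : Matrix (Fin T) (Fin T) ℝ)
    (hB : ∀ t τ : Fin T,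
      B t τ = if (τ : ℕ) + 1 ≤ (t : ℕ) + 1
        then (((τ : ℕ) + 1 : ℝ) - 1) / ((T : ℝ) * ((T : ℝ) - ((τ : ℕ) + 1) + 1))
        else -(1 / (T : ℝ))) :
    (B * Bᵀ).trace = ∑ k ∈ Finset.Icc 2 T, (1 : ℝ) / k := by
  have hT0 : (T : ℝ) ≠ 0 := by positivity
  have htr : (B * Bᵀ).trace = ∑ τ : Fin T, ∑ t : Fin T, B t τ * B t τ := by
    rw [Finset.sum_comm]
    simp [Matrix.trace, Matrix.mul_apply, Matrix.diag, Matrix.transpose_apply]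
  rw [htr]
  have hcol : ∀ τ : Fin T, ∑ t : Fin T, B t τ * B t τ
      = 1 / ((T - (τ : ℕ) : ℕ) : ℝ) - 1 / T := by
    intro τ
    have hτT : (τ : ℕ) < T := τ.isLt
    have hxy : ((τ : ℕ) : ℝ) < (T : ℝ) := by exact_mod_cast hτT
    have hsub : ((T - (τ : ℕ) : ℕ) : ℝ) = (T : ℝ) - (τ : ℕ) := by
      push_cast [Nat.cast_sub hτT.le]; ring
    have hd : (T : ℝ) - (τ : ℕ) ≠ 0 := by linarith
    set c : ℝ := (((τ : ℕ) : ℝ)) / ((T : ℝ) * ((T : ℝ) - (τ : ℕ))) with hc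
    have hentry : ∀ t : Fin T, B t τ * B t τ
        = if (τ : ℕ) ≤ (t : ℕ) then c * c else (1 / T) * (1 / T) := by
      intro t
      rw [hB t τ]
      by_cases h : (τ : ℕ) ≤ (t : ℕ)
      · rw [if_pos (by omega), if_pos h, hc]; ring_nf
      · rw [if_neg (by omega), if_neg h]; ring
    calc ∑ t : Fin T, B t τ * B t τ
        = ∑ t ∈ Finset.range T, (if (τ : ℕ) ≤ t then c * c else (1 / T) * (1 / T)) := by
          rw [← Fin.sum_univ_eq_sum_range]; exact Finset.sum_congr rfl (fun t _ => hentry t)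
      _ = ∑ t ∈ Finset.range (τ : ℕ), (if (τ : ℕ) ≤ t then c * c else (1 / T) * (1 / T))
          + ∑ t ∈ Finset.Ico (τ : ℕ) T, (if (τ : ℕ) ≤ t then c * c else (1 / T) * (1 / T)) := by
          rw [Finset.range_eq_Ico, ← Finset.sum_Ico_consecutive _ (Nat.zero_le _) hτT.le, Finset.range_eq_Ico]
      _ = (τ : ℕ) * ((1 / T) * (1 / T)) + (T - (τ : ℕ) : ℕ) * (c * c) := by
          rw [Finset.sum_ite_of_false (by intro t ht; simp at ht; omega),
            Finset.sum_ite_of_true (by intro t ht; simp at ht; omega)]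
          simp [Nat.card_Ico, mul_comm]
      _ = 1 / ((T - (τ : ℕ) : ℕ) : ℝ) - 1 / T := by
          rw [hsub, hc]
          field_simp
          ring
  rw [Finset.sum_congr rfl (fun τ _ => hcol τ), Finset.sum_sub_distrib]
  have h1 : ∑ τ : Fin T, (1 : ℝ) / ((T - (τ : ℕ) : ℕ) : ℝ)
      = ∑ k ∈ Finset.Icc 1 T, (1 : ℝ) / k := by
    rw [Fin.sum_univ_eq_sum_range (fun i => (1 : ℝ) / ((T - i : ℕ) : ℝ)) T]
    rw [← Finset.sum_range_reflect (fun i => (1 : ℝ) / ((T - i : ℕ) : ℝ)) T]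
    have h2 : ∑ k ∈ Finset.Icc 1 T, (1 : ℝ) / k
        = ∑ j ∈ Finset.range T, (1 : ℝ) / ((j + 1 : ℕ) : ℝ) := by
      rw [← Finset.Ico_add_one_right_eq_Icc, Finset.sum_Ico_eq_sum_range]
      simp [add_comm]
    rw [h2]
    apply Finset.sum_congr rfl
    intro j hj
    simp only [Finset.mem_range] at hj
    congr 2
    omega
  have h2 : ∑ _τ : Fin T, (1 : ℝ) / T = 1 := by
    rw [Finset.sum_const, Finset.card_univ, Fintype.card_fin, nsmul_eq_mul]
    field_simp
  rw [h1, h2]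
  have hsplit : Finset.Icc 1 T = insert 1 (Finset.Icc 2 T) := by
    ext k; simp; omega
  rw [hsplit, Finset.sum_insert (by simp)]
  norm_num
end

section
/- Let T ≥ 1, let x ∈ ℝ^T, and define V₁ = (1/T) Σ_{t=1}^{T} ( Σ_{τ=1}^{t} ((τ-1)/(T(T-τ+1))) x(τ) - Σ_{τ=t+1}^{T} (1/T) x(τ) )². Then V₁ = (1/T²) Σ_{τ=1}^{T} Σ_{s=1}^{T} ( T/(T - min(τ,s) + 1) - 1 ) x(τ) x(s). -/
open Finset

private lemma key_sum (T τ s : ℕ) (hT : 1 ≤ T) (hτ : 1 ≤ τ) (hτs : τ ≤ s) (hs : s ≤ T) :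
    ∑ t ∈ Finset.Icc 1 T,
      ((if τ ≤ t then ((τ:ℝ)-1)/((T:ℝ)*((T:ℝ)-τ+1)) else -(1/(T:ℝ))) *
       (if s ≤ t then ((s:ℝ)-1)/((T:ℝ)*((T:ℝ)-s+1)) else -(1/(T:ℝ))))
    = (1/(T:ℝ)) * ((T:ℝ)/((T:ℝ)-τ+1) - 1) := by
  have h3 : s ≤ T + 1 := le_trans hs (Nat.le_succ T)
  rw [← Finset.Ico_add_one_right_eq_Icc,
      ← Finset.sum_Ico_consecutive _ hτ (le_trans hτs h3),
      ← Finset.sum_Ico_consecutive _ hτs h3]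
  have e1 : ∑ t ∈ Finset.Ico 1 τ,
      ((if τ ≤ t then ((τ:ℝ)-1)/((T:ℝ)*((T:ℝ)-τ+1)) else -(1/(T:ℝ))) *
       (if s ≤ t then ((s:ℝ)-1)/((T:ℝ)*((T:ℝ)-s+1)) else -(1/(T:ℝ))))
      = ((τ:ℝ) - 1) * ((-(1/(T:ℝ))) * (-(1/(T:ℝ)))) := by
    rw [Finset.sum_congr rfl (fun t ht => ?_), Finset.sum_const, Nat.card_Ico,
        nsmul_eq_mul, Nat.cast_sub hτ, Nat.cast_one]
    rw [Finset.mem_Ico] at ht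
    rw [if_neg (by omega), if_neg (by omega)]
  have e2 : ∑ t ∈ Finset.Ico τ s,
      ((if τ ≤ t then ((τ:ℝ)-1)/((T:ℝ)*((T:ℝ)-τ+1)) else -(1/(T:ℝ))) *
       (if s ≤ t then ((s:ℝ)-1)/((T:ℝ)*((T:ℝ)-s+1)) else -(1/(T:ℝ))))
      = ((s:ℝ) - τ) * ((((τ:ℝ)-1)/((T:ℝ)*((T:ℝ)-τ+1))) * (-(1/(T:ℝ)))) := by
    rw [Finset.sum_congr rfl (fun t ht => ?_), Finset.sum_const, Nat.card_Ico,
        nsmul_eq_mul, Nat.cast_sub hτs]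
    rw [Finset.mem_Ico] at ht
    rw [if_pos (by omega), if_neg (by omega)]
  have e3 : ∑ t ∈ Finset.Ico s (T+1),
      ((if τ ≤ t then ((τ:ℝ)-1)/((T:ℝ)*((T:ℝ)-τ+1)) else -(1/(T:ℝ))) *
       (if s ≤ t then ((s:ℝ)-1)/((T:ℝ)*((T:ℝ)-s+1)) else -(1/(T:ℝ))))
      = ((T:ℝ) + 1 - s) * ((((τ:ℝ)-1)/((T:ℝ)*((T:ℝ)-τ+1))) *
          (((s:ℝ)-1)/((T:ℝ)*((T:ℝ)-s+1)))) := by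
    rw [Finset.sum_congr rfl (fun t ht => ?_), Finset.sum_const, Nat.card_Ico,
        nsmul_eq_mul, Nat.cast_sub h3, Nat.cast_add, Nat.cast_one]
    rw [Finset.mem_Ico] at ht
    rw [if_pos (by omega), if_pos (by omega)]
  rw [e1, e2, e3]
  have hT0 : (T:ℝ) ≠ 0 := Nat.cast_ne_zero.mpr (by omega)
  have hτT : (τ:ℝ) ≤ (T:ℝ) := Nat.cast_le.mpr (hτs.trans hs)
  have hsT : (s:ℝ) ≤ (T:ℝ) := Nat.cast_le.mpr hs
  have hd1 : (T:ℝ) - τ + 1 ≠ 0 := by linarith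
  have hd2 : (T:ℝ) - s + 1 ≠ 0 := by linarith
  field_simp
  ring

theorem stmt_3 (T : ℕ) (hT : 1 ≤ T) (x : ℕ → ℝ) :
    (1 / (T : ℝ)) * ∑ t ∈ Finset.Icc 1 T,
      (∑ τ ∈ Finset.Icc 1 t, (((τ : ℝ) - 1) / ((T : ℝ) * ((T : ℝ) - τ + 1))) * x τ
        - ∑ τ ∈ Finset.Icc (t + 1) T, (1 / (T : ℝ)) * x τ) ^ 2
    = (1 / (T : ℝ) ^ 2) * ∑ τ ∈ Finset.Icc 1 T, ∑ s ∈ Finset.Icc 1 T,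
        ((T : ℝ) / ((T : ℝ) - (min τ s : ℕ) + 1) - 1) * x τ * x s := by
  set A : ℕ → ℕ → ℝ := fun t τ =>
    if τ ≤ t then ((τ:ℝ)-1)/((T:ℝ)*((T:ℝ)-τ+1)) else -(1/(T:ℝ)) with hA
  -- Step 1: inner expression as single sum
  have step1 : ∀ t ∈ Finset.Icc 1 T,
      (∑ τ ∈ Finset.Icc 1 t, (((τ : ℝ) - 1) / ((T : ℝ) * ((T : ℝ) - τ + 1))) * x τ
        - ∑ τ ∈ Finset.Icc (t + 1) T, (1 / (T : ℝ)) * x τ)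
      = ∑ τ ∈ Finset.Icc 1 T, A t τ * x τ := by
    intro t ht
    rw [Finset.mem_Icc] at ht
    rw [← Finset.Ico_add_one_right_eq_Icc 1 T,
        ← Finset.sum_Ico_consecutive _ (by omega : 1 ≤ t + 1) (by omega : t + 1 ≤ T + 1),
        Finset.Ico_add_one_right_eq_Icc 1 t, Finset.Ico_add_one_right_eq_Icc (t+1) T]
    rw [Finset.sum_congr rfl (fun τ hτ => ?_), sub_eq_add_neg, ← Finset.sum_neg_distrib]
    · congr 1
      refine Finset.sum_congr rfl (fun τ hτ => ?_)
      rw [Finset.mem_Icc] at hτ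
      simp only [hA]
      rw [if_neg (by omega)]
      ring
    · rw [Finset.mem_Icc] at hτ
      simp only [hA]
      rw [if_pos (by omega)]
  rw [Finset.sum_congr rfl (fun t ht => by rw [step1 t ht])]
  -- Step 2: expand the square
  have step2 : ∀ t : ℕ, (∑ τ ∈ Finset.Icc 1 T, A t τ * x τ) ^ 2
      = ∑ τ ∈ Finset.Icc 1 T, ∑ s ∈ Finset.Icc 1 T, (A t τ * A t s) * (x τ * x s) := by
    intro t
    rw [sq, Finset.sum_mul_sum]
    exact Finset.sum_congr rfl fun τ _ => Finset.sum_congr rfl fun s _ => by ring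
  simp_rw [step2]
  have hcoef : ∀ τ ∈ Finset.Icc 1 T, ∀ s ∈ Finset.Icc 1 T,
      ∑ t ∈ Finset.Icc 1 T, A t τ * A t s
      = (1/(T:ℝ)) * ((T:ℝ)/((T:ℝ)-(min τ s : ℕ)+1) - 1) := by
    intro τ hτ s hs
    rw [Finset.mem_Icc] at hτ hs
    rcases le_total τ s with h | h
    · rw [min_eq_left h]
      exact key_sum T τ s hT hτ.1 h hs.2
    · rw [min_eq_right h]
      rw [Finset.sum_congr rfl (fun t _ => mul_comm (A t τ) (A t s))]
      exact key_sum T s τ hT hs.1 h hτ.2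
  have step3 : ∑ t ∈ Finset.Icc 1 T, ∑ τ ∈ Finset.Icc 1 T, ∑ s ∈ Finset.Icc 1 T,
        (A t τ * A t s) * (x τ * x s)
      = ∑ τ ∈ Finset.Icc 1 T, ∑ s ∈ Finset.Icc 1 T,
        (∑ t ∈ Finset.Icc 1 T, A t τ * A t s) * (x τ * x s) := by
    rw [Finset.sum_comm]
    refine Finset.sum_congr rfl (fun τ _ => ?_)
    rw [Finset.sum_comm]
    refine Finset.sum_congr rfl (fun s _ => ?_)
    rw [Finset.sum_mul]
  rw [step3, Finset.mul_sum, Finset.mul_sum]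
  refine Finset.sum_congr rfl (fun τ hτ => ?_)
  rw [Finset.mul_sum, Finset.mul_sum]
  refine Finset.sum_congr rfl (fun s hs => ?_)
  rw [hcoef τ hτ s hs]
  ring
end

section
/- Let T ≥ 1 and let x ∈ ℝ^T satisfy |x(t)| ≤ ε for all t. Define V₁ = (1/T²) Σ_{τ=1}^{T} Σ_{s=1}^{T} ((min(τ,s)-1)/(T - min(τ,s) + 1)) x(τ) x(s). Then V₁ ≤ ε² (1 - (1/T) Σ_{k=1}^{T} 1/k), with equality when x(t) = ε for all t. -/
open Finset

private lemma tele (T : ℕ) (m : ℕ) (h1 : 1 ≤ m) (h2 : m ≤ T) :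
    ((m : ℝ) - 1) / ((T : ℝ) - m + 1)
      = ∑ k ∈ Finset.Icc 2 m, (T : ℝ) / (((T : ℝ) - k + 1) * ((T : ℝ) - k + 2)) := by
  induction m with
  | zero => omega
  | succ n ih =>
    rcases Nat.lt_or_ge n 1 with h | h
    · interval_cases n
      simp
    · rw [Finset.sum_Icc_succ_top (by omega), ← ih h (by omega)]
      have hn : (n : ℝ) ≤ T - 1 := by
        have : (n : ℝ) + 1 ≤ T := by exact_mod_cast h2
        linarith
      have d1 : (T : ℝ) - n + 1 ≠ 0 := by linarith
      have d2 : (T : ℝ) - (n + 1 : ℕ) + 1 ≠ 0 := by push_cast; linarith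
      have d3 : (T : ℝ) - (n + 1 : ℕ) + 2 ≠ 0 := by push_cast; linarith
      push_cast at d2 d3 ⊢
      field_simp
      ring

private lemma rewr (T : ℕ) (x : ℕ → ℝ) :
    ∑ τ ∈ Finset.Icc 1 T, ∑ s ∈ Finset.Icc 1 T,
        (((min τ s : ℕ) - 1 : ℝ) / ((T : ℝ) - (min τ s : ℕ) + 1)) * x τ * x s
      = ∑ m ∈ Finset.Icc 2 T, ((T : ℝ) / (((T : ℝ) - m + 1) * ((T : ℝ) - m + 2)))
          * (∑ t ∈ Finset.Icc m T, x t) ^ 2 := by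
  have step1 : ∑ τ ∈ Finset.Icc 1 T, ∑ s ∈ Finset.Icc 1 T,
        (((min τ s : ℕ) - 1 : ℝ) / ((T : ℝ) - (min τ s : ℕ) + 1)) * x τ * x s
      = ∑ τ ∈ Finset.Icc 1 T, ∑ s ∈ Finset.Icc 1 T, ∑ m ∈ Finset.Icc 2 T,
          (if m ≤ τ ∧ m ≤ s then
            ((T : ℝ) / (((T : ℝ) - m + 1) * ((T : ℝ) - m + 2))) * x τ * x s else 0) := by
    refine Finset.sum_congr rfl fun τ hτ => Finset.sum_congr rfl fun s hs => ?_
    simp only [Finset.mem_Icc] at hτ hs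
    rw [tele T (min τ s) (le_min hτ.1 hs.1) (le_trans (min_le_left _ _) hτ.2)]
    rw [Finset.sum_mul, Finset.sum_mul]
    have hset : Finset.Icc 2 (min τ s) = (Finset.Icc 2 T).filter (fun m => m ≤ τ ∧ m ≤ s) := by
      ext k
      simp only [Finset.mem_Icc, Finset.mem_filter, le_min_iff]
      omega
    rw [hset, Finset.sum_filter]
  rw [step1]
  rw [show (∑ τ ∈ Finset.Icc 1 T, ∑ s ∈ Finset.Icc 1 T, ∑ m ∈ Finset.Icc 2 T,
          (if m ≤ τ ∧ m ≤ s then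
            ((T : ℝ) / (((T : ℝ) - m + 1) * ((T : ℝ) - m + 2))) * x τ * x s else 0))
      = ∑ m ∈ Finset.Icc 2 T, ∑ τ ∈ Finset.Icc 1 T, ∑ s ∈ Finset.Icc 1 T,
          (if m ≤ τ ∧ m ≤ s then
            ((T : ℝ) / (((T : ℝ) - m + 1) * ((T : ℝ) - m + 2))) * x τ * x s else 0) from
    Eq.trans (Finset.sum_congr rfl fun τ _ => Finset.sum_comm) Finset.sum_comm]
  refine Finset.sum_congr rfl fun m hm => ?_
  simp only [Finset.mem_Icc] at hm
  set d : ℝ := (T : ℝ) / (((T : ℝ) - m + 1) * ((T : ℝ) - m + 2)) with hd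
  have hset2 : Finset.Icc m T = (Finset.Icc 1 T).filter (fun t => m ≤ t) := by
    ext k
    simp only [Finset.mem_Icc, Finset.mem_filter]
    omega
  calc ∑ τ ∈ Finset.Icc 1 T, ∑ s ∈ Finset.Icc 1 T,
          (if m ≤ τ ∧ m ≤ s then d * x τ * x s else 0)
      = ∑ τ ∈ Finset.Icc 1 T, (if m ≤ τ then
          ∑ s ∈ Finset.Icc 1 T, (if m ≤ s then d * x τ * x s else 0) else 0) := by
        refine Finset.sum_congr rfl fun τ _ => ?_
        split_ifs with h
        · refine Finset.sum_congr rfl fun s _ => ?_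
          simp [h]
        · simp [h]
    _ = ∑ τ ∈ Finset.Icc m T, ∑ s ∈ Finset.Icc m T, d * x τ * x s := by
        rw [hset2, Finset.sum_filter]
        refine Finset.sum_congr rfl fun τ _ => ?_
        split_ifs with h
        · rw [Finset.sum_filter]
        · rfl
    _ = d * (∑ t ∈ Finset.Icc m T, x t) ^ 2 := by
        rw [sq, Finset.sum_mul_sum, Finset.mul_sum]
        exact Finset.sum_congr rfl fun τ _ => by
          rw [Finset.mul_sum]
          exact Finset.sum_congr rfl fun s _ => by ring

private lemma ident (T : ℕ) (hT : 1 ≤ T) :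
    ∑ m ∈ Finset.Icc 2 T, ((T : ℝ) / (((T : ℝ) - m + 1) * ((T : ℝ) - m + 2)))
        * ((T : ℝ) - m + 1) ^ 2
      = (T : ℝ) * ((T : ℝ) - ∑ k ∈ Finset.Icc 1 T, (1 : ℝ) / k) := by
  have step1 : ∀ m ∈ Finset.Icc 2 T,
      ((T : ℝ) / (((T : ℝ) - m + 1) * ((T : ℝ) - m + 2))) * ((T : ℝ) - m + 1) ^ 2
        = (T : ℝ) - (T : ℝ) / ((T : ℝ) - m + 2) := by
    intro m hm
    simp only [Finset.mem_Icc] at hm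
    have hmT : (m : ℝ) ≤ T := by exact_mod_cast hm.2
    have d1 : (T : ℝ) - m + 1 ≠ 0 := by linarith
    have d2 : (T : ℝ) - m + 2 ≠ 0 := by linarith
    field_simp
    ring
  rw [Finset.sum_congr rfl step1, Finset.sum_sub_distrib, Finset.sum_const,
    Nat.card_Icc]
  have reidx : ∑ m ∈ Finset.Icc 2 T, (T : ℝ) / ((T : ℝ) - m + 2)
      = ∑ j ∈ Finset.Icc 2 T, (T : ℝ) / (j : ℝ) := by
    refine Finset.sum_nbij' (fun m => T + 2 - m) (fun j => T + 2 - j) ?_ ?_ ?_ ?_ ?_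
    · intro a ha; simp only [Finset.mem_Icc] at *; omega
    · intro a ha; simp only [Finset.mem_Icc] at *; omega
    · intro a ha; simp only [Finset.mem_Icc] at *; omega
    · intro a ha; simp only [Finset.mem_Icc] at *; omega
    · intro a ha
      simp only [Finset.mem_Icc] at ha
      have : ((T + 2 - a : ℕ) : ℝ) = (T : ℝ) - a + 2 := by
        push_cast [Nat.cast_sub (by omega : a ≤ T + 2)]
        ring
      rw [this]
  rw [reidx]
  have split1 : ∑ k ∈ Finset.Icc 1 T, (1 : ℝ) / k
      = 1 + ∑ k ∈ Finset.Icc 2 T, (1 : ℝ) / k := by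
    rw [show Finset.Icc 1 T = insert 1 (Finset.Icc 2 T) by
        ext k; simp [Finset.mem_insert, Finset.mem_Icc]; omega]
    rw [Finset.sum_insert (by simp [Finset.mem_Icc])]
    norm_num
  rw [split1, nsmul_eq_mul]
  have hc : ((T + 1 - 2 : ℕ) : ℝ) = (T : ℝ) - 1 := by
    push_cast [Nat.cast_sub (by omega : 1 ≤ T)]
    ring
  have hs : ∑ j ∈ Finset.Icc 2 T, (T : ℝ) / (j : ℝ)
      = (T : ℝ) * ∑ j ∈ Finset.Icc 2 T, (1 : ℝ) / j := by
    rw [Finset.mul_sum]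
    exact Finset.sum_congr rfl fun j _ => by ring
  rw [hc, hs]
  ring

theorem stmt_4 (T : ℕ) (hT : 1 ≤ T) (ε : ℝ) (hε : 0 < ε) (x : ℕ → ℝ)
    (hx : ∀ t ∈ Finset.Icc 1 T, |x t| ≤ ε) :
    (1 / (T : ℝ) ^ 2) * ∑ τ ∈ Finset.Icc 1 T, ∑ s ∈ Finset.Icc 1 T,
        (((min τ s : ℕ) - 1 : ℝ) / ((T : ℝ) - (min τ s : ℕ) + 1)) * x τ * x s
      ≤ ε ^ 2 * (1 - (1 / (T : ℝ)) * ∑ k ∈ Finset.Icc 1 T, (1 : ℝ) / k)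
    ∧ ((∀ t ∈ Finset.Icc 1 T, x t = ε) →
      (1 / (T : ℝ) ^ 2) * ∑ τ ∈ Finset.Icc 1 T, ∑ s ∈ Finset.Icc 1 T,
          (((min τ s : ℕ) - 1 : ℝ) / ((T : ℝ) - (min τ s : ℕ) + 1)) * x τ * x s
        = ε ^ 2 * (1 - (1 / (T : ℝ)) * ∑ k ∈ Finset.Icc 1 T, (1 : ℝ) / k)) := by
  have hT0 : (0 : ℝ) < T := by exact_mod_cast hT
  -- closed-form value of the extremal sum
  have key : (1 / (T : ℝ) ^ 2) * ∑ m ∈ Finset.Icc 2 T,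
        ((T : ℝ) / (((T : ℝ) - m + 1) * ((T : ℝ) - m + 2))) * (ε * ((T : ℝ) - m + 1)) ^ 2
      = ε ^ 2 * (1 - (1 / (T : ℝ)) * ∑ k ∈ Finset.Icc 1 T, (1 : ℝ) / k) := by
    have : ∑ m ∈ Finset.Icc 2 T,
        ((T : ℝ) / (((T : ℝ) - m + 1) * ((T : ℝ) - m + 2))) * (ε * ((T : ℝ) - m + 1)) ^ 2
      = ε ^ 2 * ∑ m ∈ Finset.Icc 2 T,
        ((T : ℝ) / (((T : ℝ) - m + 1) * ((T : ℝ) - m + 2))) * ((T : ℝ) - m + 1) ^ 2 := by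
      rw [Finset.mul_sum]
      exact Finset.sum_congr rfl fun m _ => by ring
    rw [this, ident T hT]
    field_simp
  have dpos : ∀ m ∈ Finset.Icc 2 T,
      0 ≤ (T : ℝ) / (((T : ℝ) - m + 1) * ((T : ℝ) - m + 2)) := by
    intro m hm
    simp only [Finset.mem_Icc] at hm
    have hmT : (m : ℝ) ≤ T := by exact_mod_cast hm.2
    have d1 : (0:ℝ) < (T : ℝ) - m + 1 := by linarith
    have d2 : (0:ℝ) < (T : ℝ) - m + 2 := by linarith
    positivity
  have tailbound : ∀ m ∈ Finset.Icc 2 T,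
      (∑ t ∈ Finset.Icc m T, x t) ^ 2 ≤ (ε * ((T : ℝ) - m + 1)) ^ 2 := by
    intro m hm
    simp only [Finset.mem_Icc] at hm
    have habs : |∑ t ∈ Finset.Icc m T, x t| ≤ ε * ((T : ℝ) - m + 1) := by
      calc |∑ t ∈ Finset.Icc m T, x t| ≤ ∑ t ∈ Finset.Icc m T, |x t| :=
            Finset.abs_sum_le_sum_abs _ _
        _ ≤ ∑ t ∈ Finset.Icc m T, ε := by
            refine Finset.sum_le_sum fun t ht => ?_
            refine hx t ?_
            simp only [Finset.mem_Icc] at ht ⊢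
            omega
        _ = ε * ((T : ℝ) - m + 1) := by
            rw [Finset.sum_const, Nat.card_Icc, nsmul_eq_mul]
            have : ((T + 1 - m : ℕ) : ℝ) = (T : ℝ) - m + 1 := by
              push_cast [Nat.cast_sub (by omega : m ≤ T + 1)]
              ring
            rw [this]
            ring
    have := sq_abs (∑ t ∈ Finset.Icc m T, x t)
    nlinarith [abs_nonneg (∑ t ∈ Finset.Icc m T, x t)]
  constructor
  · rw [rewr T x, ← key]
    refine mul_le_mul_of_nonneg_left ?_ (by positivity)
    exact Finset.sum_le_sum fun m hm =>
      mul_le_mul_of_nonneg_left (tailbound m hm) (dpos m hm)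
  · intro hxe
    rw [rewr T x, ← key]
    congr 1
    refine Finset.sum_congr rfl fun m hm => ?_
    simp only [Finset.mem_Icc] at hm
    congr 1
    have : ∑ t ∈ Finset.Icc m T, x t = ε * ((T : ℝ) - m + 1) := by
      have : ∀ t ∈ Finset.Icc m T, x t = ε := by
        intro t ht
        refine hxe t ?_
        simp only [Finset.mem_Icc] at ht ⊢
        omega
      rw [Finset.sum_congr rfl this, Finset.sum_const, Nat.card_Icc, nsmul_eq_mul]
      have hc : ((T + 1 - m : ℕ) : ℝ) = (T : ℝ) - m + 1 := by
        push_cast [Nat.cast_sub (by omega : m ≤ T + 1)]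
        ring
      rw [hc]
      ring
    rw [this]
end

section
/- Let f : ℝⁿ → ℝ be convex and differentiable, let X be a random vector supported on [-d/2, d/2]ⁿ with E[f(X)] = 0, and suppose the self-bounding property ‖∇f(x)‖² ≤ a f(x) + b holds for all x in the support, with a, b ≥ 0. Assume the log-Sobolev-type inequality E[e^{g(X)} g(X)] - E[e^{g(X)}] log E[e^{g(X)}] ≤ (d²/2) E[e^{g(X)} ‖∇g(X)‖²] holds for every convex differentiable g. Then for all t > 0, P(f(X) > t) ≤ exp( -t² / (d²(2b + a t)) ). -/
open MeasureTheory Set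

section Helpers
open Filter Real




variable {n : ℕ}

lemma grad_const_mul (f : EuclideanSpace ℝ (Fin n) → ℝ) (x : EuclideanSpace ℝ (Fin n))
    (hf : DifferentiableAt ℝ f x) (c : ℝ) :
    gradient (fun y => c * f y) x = c • gradient f x := by
  unfold gradient
  rw [fderiv_const_mul hf c]
  simp

lemma grad_meas (f : EuclideanSpace ℝ (Fin n) → ℝ) :
    Measurable (gradient f) := by
  unfold gradient
  exact (LinearIsometryEquiv.continuous _).measurable.comp (measurable_fderiv ℝ f)

lemma cube_bound (f : EuclideanSpace ℝ (Fin n) → ℝ) (hf : Continuous f) (d : ℝ) (hd : 0 < d) :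
    ∃ M : ℝ, 0 ≤ M ∧ ∀ x : EuclideanSpace ℝ (Fin n), (∀ i, |x i| ≤ d / 2) → |f x| ≤ M := by
  set C : Set (EuclideanSpace ℝ (Fin n)) := {x | ∀ i, |x i| ≤ d / 2} with hC
  have hclosed : IsClosed C := by
    have : C = ⋂ i, (fun x : EuclideanSpace ℝ (Fin n) => x i) ⁻¹' (Icc (-(d/2)) (d/2)) := by
      ext x; simp [hC, abs_le]
    rw [this]
    exact isClosed_iInter fun i =>
      (isClosed_Icc).preimage (EuclideanSpace.proj (𝕜 := ℝ) i).continuous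
  have hsub : C ⊆ Metric.closedBall 0 (Real.sqrt (n * (d/2)^2)) := by
    intro x hx
    rw [Metric.mem_closedBall, dist_zero_right, EuclideanSpace.norm_eq]
    apply Real.sqrt_le_sqrt
    calc ∑ i, ‖x i‖ ^ 2 ≤ ∑ _i : Fin n, (d/2)^2 := by
          apply Finset.sum_le_sum
          intro i _
          have := hx i
          rw [Real.norm_eq_abs]
          nlinarith [abs_nonneg (x i)]
      _ = n * (d/2)^2 := by simp [Finset.sum_const, nsmul_eq_mul]
  have hcomp : IsCompact C :=
    (isCompact_closedBall 0 _).of_isClosed_subset hclosed hsub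
  obtain ⟨M0, hM0⟩ := hcomp.exists_bound_of_continuousOn hf.continuousOn
  exact ⟨max M0 0, le_max_right _ _, fun x hx =>
    le_trans (by simpa [Real.norm_eq_abs] using hM0 x hx) (le_max_left _ _)⟩



set_option maxHeartbeats 1000000 in
lemma herbst_ode (H D : ℝ → ℝ) (c β Λ : ℝ) (hβ : 0 ≤ β) (hΛ : 0 < Λ)
    (hcΛ : c * Λ < 1) (hH0 : H 0 = 0)
    (hD : ∀ l ∈ Icc (0:ℝ) Λ, HasDerivAt H (D l) l) (hD0 : D 0 = 0)
    (hineq : ∀ l ∈ Ioc (0:ℝ) Λ, l * (1 - c * l) * D l ≤ H l + β * l ^ 2) :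
    H Λ ≤ β * Λ ^ 2 / (1 - c * Λ) := by
  set w : ℝ → ℝ := fun l => H l * (1 - c * l) / l - β * l with hw
  have hw0 : w 0 = 0 := by simp [hw, hH0]
  -- derivative of w on (0, Λ]
  have hwderiv : ∀ l ∈ Ioc (0:ℝ) Λ, HasDerivAt w
      (D l * ((1 - c * l) / l) + H l * (-(1/l^2)) - β) l := by
    intro l hl
    have hl0 : l ≠ 0 := ne_of_gt hl.1
    have h1 : HasDerivAt (fun l : ℝ => (1 - c * l) / l) (-(1/l^2)) l := by
      have h1' : HasDerivAt (fun l : ℝ => l⁻¹ - c) (-(l^2)⁻¹) l := by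
        simpa using (hasDerivAt_inv hl0).sub_const c
      have heq : (fun l : ℝ => (1 - c * l) / l) =ᶠ[nhds l] (fun l : ℝ => l⁻¹ - c) := by
        filter_upwards [eventually_ne_nhds hl0] with x hx
        field_simp
      have h2 := h1'.congr_of_eventuallyEq heq
      rw [one_div]
      exact h2
    have h2 : HasDerivAt (fun l => H l * ((1 - c * l) / l))
        (D l * ((1 - c * l) / l) + H l * (-(1/l^2))) l :=
      (hD l ⟨le_of_lt hl.1, hl.2⟩).mul h1
    have h3 : HasDerivAt (fun l : ℝ => β * l) β l := by
      simpa using (hasDerivAt_id l).const_mul β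
    have := h2.sub h3
    refine this.congr_of_eventuallyEq (Filter.Eventually.of_forall fun x => ?_)
    simp [hw, mul_div_assoc]
  -- the derivative is nonpositive
  have hderiv_nonpos : ∀ l ∈ Ioo (0:ℝ) Λ, deriv w l ≤ 0 := by
    intro l hl
    have hlm : l ∈ Ioc (0:ℝ) Λ := ⟨hl.1, le_of_lt hl.2⟩
    rw [(hwderiv l hlm).deriv]
    have hl0 : 0 < l := hl.1
    have hkey := hineq l hlm
    have e : D l * ((1 - c * l) / l) = (l * (1 - c * l) * D l) / l^2 := by
      field_simp
    have h2 : D l * ((1 - c * l) / l) ≤ (H l + β * l ^ 2) / l ^ 2 := by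
      rw [e]
      exact div_le_div_of_nonneg_right hkey (by positivity) |>.trans_eq rfl
    have e2 : (H l + β * l ^ 2) / l ^ 2 = H l / l ^ 2 + β := by field_simp
    have e3 : H l * (-(1/l^2)) = -(H l / l^2) := by ring
    rw [e2] at h2
    linarith [h2, e3 ▸ le_refl (H l * (-(1/l^2)))]
  -- continuity of w on [0, Λ]
  have hcont : ContinuousOn w (Icc 0 Λ) := by
    intro x hx
    rcases eq_or_lt_of_le hx.1 with h0 | h0
    · -- continuity at 0 via the slope limit
      have hslope : Tendsto (fun l => H l / l) (nhdsWithin 0 ({0}ᶜ)) (nhds 0) := by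
        have hda := (hD 0 ⟨le_refl 0, le_of_lt hΛ⟩)
        rw [hasDerivAt_iff_tendsto_slope, hD0] at hda
        refine hda.congr (fun l => ?_)
        simp [slope_def_field, hH0, div_eq_inv_mul]
      have hwt : Tendsto w (nhdsWithin 0 ({0}ᶜ)) (nhds 0) := by
        have hc1 : Tendsto (fun l : ℝ => 1 - c * l) (nhdsWithin 0 ({0}ᶜ)) (nhds 1) := by
          have h : Continuous (fun l : ℝ => 1 - c * l) := by continuity
          have h2 := h.tendsto (0:ℝ)
          simp only [mul_zero, sub_zero] at h2
          exact h2.mono_left nhdsWithin_le_nhds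
        have hβl : Tendsto (fun l : ℝ => β * l) (nhdsWithin 0 ({0}ᶜ)) (nhds 0) := by
          have h : Continuous (fun l : ℝ => β * l) := by continuity
          have h2 := h.tendsto (0:ℝ)
          simp only [mul_zero] at h2
          exact h2.mono_left nhdsWithin_le_nhds
        have h1 := (hslope.mul hc1).sub hβl
        simp only [zero_mul, sub_zero, one_mul] at h1
        refine h1.congr (fun l => ?_)
        simp only [hw]
        ring
      rw [← h0, ← continuousWithinAt_diff_self]
      rw [ContinuousWithinAt, hw0]
      exact hwt.mono_left (nhdsWithin_mono _ (fun y hy => hy.2))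
    · exact ((hwderiv x ⟨h0, hx.2⟩).continuousAt).continuousWithinAt
  -- w is antitone, hence w Λ ≤ w 0 = 0
  have hanti : AntitoneOn w (Icc 0 Λ) := by
    apply antitoneOn_of_deriv_nonpos (convex_Icc 0 Λ) hcont
    · intro x hx
      rw [interior_Icc] at hx
      exact ((hwderiv x ⟨hx.1, le_of_lt hx.2⟩).differentiableAt).differentiableWithinAt
    · intro x hx
      rw [interior_Icc] at hx
      exact hderiv_nonpos x hx
  have hwΛ : w Λ ≤ 0 := by
    have := hanti (left_mem_Icc.2 (le_of_lt hΛ)) (right_mem_Icc.2 (le_of_lt hΛ)) (le_of_lt hΛ)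
    rwa [hw0] at this
  -- unfold
  have h1cΛ : 0 < 1 - c * Λ := by linarith
  have h2 : H Λ * (1 - c * Λ) / Λ - β * Λ ≤ 0 := by
    have h := hwΛ; simp only [hw] at h; exact h
  have h3 : H Λ * (1 - c * Λ) / Λ ≤ β * Λ := by linarith
  rw [le_div_iff₀ h1cΛ]
  calc H Λ * (1 - c * Λ) = (H Λ * (1 - c * Λ) / Λ) * Λ := by field_simp
    _ ≤ (β * Λ) * Λ := mul_le_mul_of_nonneg_right h3 (le_of_lt hΛ)
    _ = β * Λ ^ 2 := by ring


end Helpers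

open Filter Real in
theorem stmt_7 (n : ℕ) (hn : 0 < n)
    (μ : Measure (EuclideanSpace ℝ (Fin n))) [IsProbabilityMeasure μ]
    (f : EuclideanSpace ℝ (Fin n) → ℝ) (d a b : ℝ)
    (hd : 0 < d) (ha : 0 ≤ a) (hb : 0 ≤ b)
    (hconv : ConvexOn ℝ Set.univ f)
    (hdiff : Differentiable ℝ f)
    (hsupp : ∀ᵐ x ∂μ, ∀ i, |x i| ≤ d / 2)
    (hmean : ∫ x, f x ∂μ = 0)
    (hself : ∀ x : EuclideanSpace ℝ (Fin n),
      (∀ i, |x i| ≤ d / 2) → ‖gradient f x‖ ^ 2 ≤ a * f x + b)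
    (hLS : ∀ g : EuclideanSpace ℝ (Fin n) → ℝ,
      ConvexOn ℝ Set.univ g → Differentiable ℝ g →
      (∫ x, Real.exp (g x) * g x ∂μ)
        - (∫ x, Real.exp (g x) ∂μ) * Real.log (∫ x, Real.exp (g x) ∂μ)
      ≤ d ^ 2 / 2 * ∫ x, Real.exp (g x) * ‖gradient g x‖ ^ 2 ∂μ) :
    ∀ t : ℝ, 0 < t →
      (μ {x | f x > t}).toReal ≤ Real.exp (-t ^ 2 / (d ^ 2 * (2 * b + a * t))) := by
  intro t ht
  by_cases hS0 : 2 * b + a * t = 0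
  · rw [hS0, mul_zero, div_zero, Real.exp_zero]
    have h : μ {x | f x > t} ≤ 1 := prob_le_one
    have h2 := ENNReal.toReal_mono (by simp) h
    simpa using h2
  have hS : 0 < 2 * b + a * t := lt_of_le_of_ne (by positivity) (Ne.symm hS0)
  -- the sup bound on the cube
  obtain ⟨M, hM0, hM⟩ := cube_bound f hdiff.continuous d hd
  have haef : ∀ᵐ x ∂μ, |f x| ≤ M := hsupp.mono fun x hx => hM x hx
  have hfc : Continuous f := hdiff.continuous
  -- integrability
  have hmexp : ∀ l : ℝ, AEStronglyMeasurable (fun x => Real.exp (l * f x)) μ :=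
    fun l => ((Real.continuous_exp.comp (continuous_const.mul hfc)).aestronglyMeasurable)
  have hint_exp : ∀ l : ℝ, Integrable (fun x => Real.exp (l * f x)) μ := by
    intro l
    refine Integrable.mono' (integrable_const (Real.exp (|l| * M))) (hmexp l) ?_
    filter_upwards [haef] with x hx
    rw [Real.norm_eq_abs, abs_of_pos (Real.exp_pos _), Real.exp_le_exp]
    calc l * f x ≤ |l * f x| := le_abs_self _
      _ = |l| * |f x| := abs_mul _ _
      _ ≤ |l| * M := by apply mul_le_mul_of_nonneg_left hx (abs_nonneg l)
  have hint_fexp : ∀ l : ℝ, Integrable (fun x => f x * Real.exp (l * f x)) μ := by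
    intro l
    refine Integrable.mono' (integrable_const (M * Real.exp (|l| * M)))
      (hfc.aestronglyMeasurable.mul (hmexp l)) ?_
    filter_upwards [haef] with x hx
    rw [Real.norm_eq_abs, abs_mul, abs_of_pos (Real.exp_pos _)]
    apply mul_le_mul hx ?_ (le_of_lt (Real.exp_pos _)) hM0
    rw [Real.exp_le_exp]
    calc l * f x ≤ |l| * |f x| := by rw [← abs_mul]; exact le_abs_self _
      _ ≤ |l| * M := mul_le_mul_of_nonneg_left hx (abs_nonneg l)
  have hgradsq_meas : AEStronglyMeasurable (fun x => ‖gradient f x‖ ^ 2) μ :=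
    (((grad_meas f).norm.pow_const 2).aestronglyMeasurable)
  have haegrad : ∀ᵐ x ∂μ, ‖gradient f x‖ ^ 2 ≤ a * f x + b :=
    hsupp.mono fun x hx => hself x hx
  have hint_gradexp : ∀ l : ℝ,
      Integrable (fun x => Real.exp (l * f x) * ‖gradient f x‖ ^ 2) μ := by
    intro l
    refine Integrable.mono' (integrable_const (Real.exp (|l| * M) * (a * M + b)))
      ((hmexp l).mul hgradsq_meas) ?_
    filter_upwards [haef, haegrad] with x hx hg
    rw [Real.norm_eq_abs, abs_mul, abs_of_pos (Real.exp_pos _), abs_of_nonneg (by positivity)]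
    apply mul_le_mul ?_ ?_ (by positivity) (by positivity)
    · rw [Real.exp_le_exp]
      calc l * f x ≤ |l| * |f x| := by rw [← abs_mul]; exact le_abs_self _
        _ ≤ |l| * M := mul_le_mul_of_nonneg_left hx (abs_nonneg l)
    · refine hg.trans ?_
      have : a * f x ≤ a * M := mul_le_mul_of_nonneg_left ((le_abs_self _).trans hx) ha
      linarith
  have hint_afb : ∀ l : ℝ,
      Integrable (fun x => Real.exp (l * f x) * (a * f x + b)) μ := by
    intro l
    have h1 : (fun x => Real.exp (l * f x) * (a * f x + b))
        = fun x => a * (f x * Real.exp (l * f x)) + b * Real.exp (l * f x) := by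
      funext x; ring
    rw [h1]
    exact ((hint_fexp l).const_mul a).add ((hint_exp l).const_mul b)
  -- the mgf and its derivative
  set φ : ℝ → ℝ := fun l => ∫ x, Real.exp (l * f x) ∂μ with hφ
  set A : ℝ → ℝ := fun l => ∫ x, f x * Real.exp (l * f x) ∂μ with hA
  have hφpos : ∀ l : ℝ, 0 < φ l := by
    intro l
    have h1 : (Real.exp (-(|l| * M)) : ℝ) = ∫ _x, Real.exp (-(|l| * M)) ∂μ := by
      simp
    have h2 : ∫ _x, Real.exp (-(|l| * M)) ∂μ ≤ φ l := by
      refine integral_mono_ae (integrable_const _) (hint_exp l) ?_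
      filter_upwards [haef] with x hx
      rw [Real.exp_le_exp]
      calc -(|l| * M) ≤ -(|l| * |f x|) := by nlinarith [abs_nonneg l]
        _ ≤ l * f x := by
            rw [← abs_mul]
            exact neg_abs_le _
    calc (0:ℝ) < Real.exp (-(|l| * M)) := Real.exp_pos _
      _ ≤ φ l := h1.le.trans h2
  have hφd : ∀ l : ℝ, HasDerivAt φ (A l) l := by
    intro l₀
    have key := hasDerivAt_integral_of_dominated_loc_of_deriv_le (μ := μ)
      (F := fun l x => Real.exp (l * f x)) (F' := fun l x => f x * Real.exp (l * f x))
      (x₀ := l₀) (s := Metric.ball l₀ 1) (bound := fun _ => M * Real.exp ((|l₀| + 1) * M))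
      (Metric.ball_mem_nhds l₀ one_pos) (Filter.Eventually.of_forall fun l => hmexp l) (hint_exp l₀)
      (hfc.aestronglyMeasurable.mul (hmexp l₀)) ?_ (integrable_const _) ?_
    · exact key.2
    · filter_upwards [haef] with x hx
      intro l hl
      rw [Real.norm_eq_abs, abs_mul, abs_of_pos (Real.exp_pos _)]
      have hlb : |l| ≤ |l₀| + 1 := by
        have := Metric.mem_ball.mp hl
        rw [Real.dist_eq] at this
        calc |l| = |l₀ + (l - l₀)| := by ring_nf
          _ ≤ |l₀| + |l - l₀| := abs_add_le _ _
          _ ≤ |l₀| + 1 := by linarith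
      apply mul_le_mul hx ?_ (le_of_lt (Real.exp_pos _)) hM0
      rw [Real.exp_le_exp]
      calc l * f x ≤ |l| * |f x| := by rw [← abs_mul]; exact le_abs_self _
        _ ≤ (|l₀| + 1) * M := by
            apply mul_le_mul hlb hx (abs_nonneg _) (by positivity)
    · refine Filter.Eventually.of_forall fun x => fun l _ => ?_
      have h := (hasDerivAt_mul_const (f x) (x := l)).exp
      simpa [mul_comm] using h
  -- basic values
  have hφ0 : φ 0 = 1 := by simp [hφ]
  have hA0 : A 0 = 0 := by simpa [hA] using hmean
  -- log mgf
  set H : ℝ → ℝ := fun l => Real.log (φ l) with hH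
  set D : ℝ → ℝ := fun l => A l / φ l with hD
  have hHd : ∀ l : ℝ, HasDerivAt H (D l) l := fun l =>
    (hφd l).log (ne_of_gt (hφpos l))
  have hH0 : H 0 = 0 := by simp [hH, hφ0]
  have hD0 : D 0 = 0 := by simp [hD, hA0]
  -- entropy inequality
  have hentropy : ∀ l : ℝ, 0 ≤ l →
      l * A l - φ l * H l ≤ d ^ 2 * l ^ 2 / 2 * (a * A l + b * φ l) := by
    intro l hl
    have hgconv : ConvexOn ℝ Set.univ (fun x => l * f x) := by
      simpa [smul_eq_mul] using hconv.smul hl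
    have hgdiff : Differentiable ℝ (fun x => l * f x) := hdiff.const_mul l
    have key := hLS (fun x => l * f x) hgconv hgdiff
    have e1 : (∫ x, Real.exp (l * f x) * (l * f x) ∂μ) = l * A l := by
      rw [hA, ← integral_const_mul]
      congr 1; funext x; ring
    have e2 : ∀ x, ‖gradient (fun y => l * f y) x‖ ^ 2 = l ^ 2 * ‖gradient f x‖ ^ 2 := by
      intro x
      rw [grad_const_mul f x (hdiff x) l, norm_smul, Real.norm_eq_abs, mul_pow, sq_abs]
    rw [e1] at key
    have e3 : (∫ x, Real.exp (l * f x) * ‖gradient (fun y => l * f y) x‖ ^ 2 ∂μ)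
        = l ^ 2 * ∫ x, Real.exp (l * f x) * ‖gradient f x‖ ^ 2 ∂μ := by
      rw [← integral_const_mul]
      congr 1; funext x; rw [e2 x]; ring
    rw [e3] at key
    have e4 : (∫ x, Real.exp (l * f x) * ‖gradient f x‖ ^ 2 ∂μ)
        ≤ ∫ x, Real.exp (l * f x) * (a * f x + b) ∂μ := by
      refine integral_mono_ae (hint_gradexp l) (hint_afb l) ?_
      filter_upwards [haegrad] with x hx
      exact mul_le_mul_of_nonneg_left hx (le_of_lt (Real.exp_pos _))
    have e5 : (∫ x, Real.exp (l * f x) * (a * f x + b) ∂μ) = a * A l + b * φ l := by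
      have h1 : (fun x => Real.exp (l * f x) * (a * f x + b))
          = fun x => a * (f x * Real.exp (l * f x)) + b * Real.exp (l * f x) := by
        funext x; ring
      rw [h1, integral_add ((hint_fexp l).const_mul a) ((hint_exp l).const_mul b),
        integral_const_mul, integral_const_mul]
    have key2 : l * A l - φ l * H l ≤ d ^ 2 / 2 * (l ^ 2 * (a * A l + b * φ l)) := by
      calc l * A l - φ l * H l ≤ d ^ 2 / 2 *
            (l ^ 2 * ∫ x, Real.exp (l * f x) * ‖gradient f x‖ ^ 2 ∂μ) := key
        _ ≤ d ^ 2 / 2 * (l ^ 2 * (a * A l + b * φ l)) := by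
            apply mul_le_mul_of_nonneg_left ?_ (by positivity)
            apply mul_le_mul_of_nonneg_left (e4.trans_eq e5) (by positivity)
    linarith [key2]
  -- differential inequality for herbst_ode
  set c : ℝ := a * d ^ 2 / 2 with hc
  set β : ℝ := b * d ^ 2 / 2 with hβ
  have hineq : ∀ l : ℝ, 0 < l → l * (1 - c * l) * D l ≤ H l + β * l ^ 2 := by
    intro l hl
    have hφl := hφpos l
    rw [← mul_le_mul_iff_left₀ hφl]
    have eD : D l * φ l = A l := by
      rw [hD]; field_simp
    have key := hentropy l (le_of_lt hl)
    calc l * (1 - c * l) * D l * φ l = l * (1 - c * l) * A l := by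
          rw [mul_assoc, eD]
      _ ≤ (H l + β * l ^ 2) * φ l := by
          rw [hc, hβ]; nlinarith [key]
  -- Chernoff bound for any Λ with 0 < Λ
  have hchernoff : ∀ Λ : ℝ, 0 < Λ →
      (μ {x | f x > t}).toReal ≤ Real.exp (-Λ * t + H Λ) := by
    intro Λ hΛ
    have markov := mul_meas_ge_le_integral_of_nonneg
      (μ := μ) (f := fun x => Real.exp (Λ * f x))
      (Filter.Eventually.of_forall fun x => le_of_lt (Real.exp_pos _))
      (hint_exp Λ) (Real.exp (Λ * t))
    have hsub : {x | f x > t} ⊆ {x | Real.exp (Λ * t) ≤ Real.exp (Λ * f x)} := by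
      intro x hx
      rw [Set.mem_setOf_eq, Real.exp_le_exp]
      exact mul_le_mul_of_nonneg_left (le_of_lt hx) (le_of_lt hΛ)
    have hmono : (μ {x | f x > t}).toReal ≤
        (μ {x | Real.exp (Λ * t) ≤ Real.exp (Λ * f x)}).toReal := by
      apply ENNReal.toReal_mono (measure_ne_top μ _) (measure_mono hsub)
    have h2 : (μ {x | Real.exp (Λ * t) ≤ Real.exp (Λ * f x)}).toReal
        ≤ φ Λ / Real.exp (Λ * t) := by
      rw [le_div_iff₀ (Real.exp_pos _), mul_comm]
      exact markov
    calc (μ {x | f x > t}).toReal ≤ φ Λ / Real.exp (Λ * t) := hmono.trans h2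
      _ = Real.exp (-Λ * t + H Λ) := by
          simp only [hH]
          rw [Real.exp_add, neg_mul, Real.exp_neg, Real.exp_log (hφpos Λ)]
          field_simp
  -- apply the ODE comparison
  have hHbound : ∀ Λ : ℝ, 0 < Λ → c * Λ < 1 → H Λ ≤ β * Λ ^ 2 / (1 - c * Λ) := by
    intro Λ hΛ hcΛ
    exact herbst_ode H D c β Λ (by positivity) hΛ hcΛ hH0
      (fun l _ => hHd l) hD0 (fun l hl => hineq l hl.1)
  -- final numeric computation
  have hd0 : d ≠ 0 := ne_of_gt hd
  have hSne : (2 * b + a * t) ≠ 0 := ne_of_gt hS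
  by_cases hbpos : 0 < b
  · -- case b > 0
    have hbne : b ≠ 0 := ne_of_gt hbpos
    set Λ := 2 * t / (d ^ 2 * (2 * b + a * t)) with hΛdef
    have hΛ : 0 < Λ := by positivity
    have ecΛ : c * Λ = a * t / (2 * b + a * t) := by
      rw [hc, hΛdef]; field_simp
    have hcΛ : c * Λ < 1 := by
      rw [ecΛ, div_lt_one hS]; linarith
    have e1 : 1 - c * Λ = 2 * b / (2 * b + a * t) := by
      rw [ecΛ]; field_simp; ring
    have h2 := hHbound Λ hΛ hcΛ
    have h3 : -Λ * t + β * Λ ^ 2 / (1 - c * Λ) = -t ^ 2 / (d ^ 2 * (2 * b + a * t)) := by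
      rw [e1, hβ, hΛdef]
      field_simp
      ring
    calc (μ {x | f x > t}).toReal ≤ Real.exp (-Λ * t + H Λ) := hchernoff Λ hΛ
      _ ≤ Real.exp (-t ^ 2 / (d ^ 2 * (2 * b + a * t))) := by
          rw [← h3]
          exact Real.exp_le_exp.2 (by linarith)
  · -- case b = 0, a > 0
    have hb0 : b = 0 := le_antisymm (not_lt.1 hbpos) hb
    have hapos : 0 < a := by
      rcases lt_or_eq_of_le ha with h | h
      · exact h
      · exfalso; rw [hb0, ← h] at hS; simp at hS
    have hane : a ≠ 0 := ne_of_gt hapos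
    set Λ := 1 / (a * d ^ 2) with hΛdef
    have hΛ : 0 < Λ := by positivity
    have hcΛ : c * Λ < 1 := by
      have e : c * Λ = 1 / 2 := by
        rw [hc, hΛdef]; field_simp
      rw [e]; norm_num
    have h2 := hHbound Λ hΛ hcΛ
    have hβ0 : β = 0 := by rw [hβ, hb0]; ring
    have h2' : H Λ ≤ 0 := by
      rw [hβ0] at h2
      simpa using h2
    have htne : t ≠ 0 := ne_of_gt ht
    have h3 : -Λ * t = -t ^ 2 / (d ^ 2 * (2 * b + a * t)) := by
      rw [hΛdef, hb0]
      field_simp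
      ring
    calc (μ {x | f x > t}).toReal ≤ Real.exp (-Λ * t + H Λ) := hchernoff Λ hΛ
      _ ≤ Real.exp (-t ^ 2 / (d ^ 2 * (2 * b + a * t))) := by
          exact Real.exp_le_exp.2 (by linarith)
end

section
/- Let T ≥ 1, let F : {0,...,T-1} → ℝ, and define the T×T matrix C by C_{tτ} = ((τ-1)/(T(T-τ+1))) F(T-τ) if τ ≤ t and C_{tτ} = -(1/T) F(T-τ) if τ > t. Then trace(C Cᵀ) = (1/T) Σ_{k=2}^{T} F(T-k)² (k-1)/(T-k+1), which equals (1/T) Σ_{t=0}^{T-2} F(t)² (T-t-1)/(t+1). -/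
open Finset Matrix

private lemma stmt_11_aux (x y c : ℝ) (hx : x ≠ 0) (hxy : x - y ≠ 0) :
    y * (-(1/x)*c)^2 + (x - y) * ((y+1-1)/(x*(x-y))*c)^2 = c^2 * y/(x*(x-y)) := by
  field_simp
  ring

theorem stmt_11 (T : ℕ) (hT : 1 ≤ T) (F : ℕ → ℝ)
    (C : Matrix (Fin T) (Fin T) ℝ)
    (hC : ∀ t τ : Fin T,
      C t τ = if (τ : ℕ) + 1 ≤ (t : ℕ) + 1
        then (((τ : ℕ) + 1 : ℝ) - 1) / ((T : ℝ) * ((T : ℝ) - ((τ : ℕ) + 1) + 1))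
              * F (T - ((τ : ℕ) + 1))
        else -(1 / (T : ℝ)) * F (T - ((τ : ℕ) + 1))) :
    (C * Cᵀ).trace
      = (1 / (T : ℝ)) * ∑ k ∈ Finset.Icc 2 T,
          F (T - k) ^ 2 * ((k : ℝ) - 1) / ((T : ℝ) - k + 1)
    ∧ (C * Cᵀ).trace
      = (1 / (T : ℝ)) * ∑ t ∈ Finset.range (T - 1),
          F t ^ 2 * ((T : ℝ) - t - 1) / ((t : ℝ) + 1) := by
  obtain ⟨T', rfl⟩ : ∃ T', T = T' + 1 := ⟨T - 1, by omega⟩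
  have hT0 : ((T' + 1 : ℕ) : ℝ) ≠ 0 := Nat.cast_ne_zero.mpr (by omega)
  set h : ℕ → ℝ := fun j =>
    F (T' + 1 - (j + 1)) ^ 2 * (j : ℝ) / (((T' + 1 : ℕ) : ℝ) * (((T' + 1 : ℕ) : ℝ) - j)) with hh
  have h1 : (C * Cᵀ).trace = ∑ τ : Fin (T' + 1), ∑ t : Fin (T' + 1), (C t τ) ^ 2 := by
    rw [Matrix.trace]
    simp only [Matrix.diag, Matrix.mul_apply, Matrix.transpose_apply, ← sq]
    exact Finset.sum_comm
  have h2 : ∀ τ : Fin (T' + 1), ∑ t : Fin (T' + 1), (C t τ) ^ 2 = h τ.val := by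
    intro τ
    have hjT : τ.val < T' + 1 := τ.isLt
    set j := τ.val with hjdef
    set a : ℝ := (((j : ℕ) + 1 : ℝ) - 1)
        / (((T' + 1 : ℕ) : ℝ) * (((T' + 1 : ℕ) : ℝ) - ((j : ℕ) + 1) + 1))
        * F (T' + 1 - ((j : ℕ) + 1)) with ha
    set b : ℝ := -(1 / ((T' + 1 : ℕ) : ℝ)) * F (T' + 1 - ((j : ℕ) + 1)) with hb
    have h3 : ∀ t : Fin (T' + 1), (C t τ) ^ 2 = if j ≤ t.val then a ^ 2 else b ^ 2 := by
      intro t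
      rw [hC]
      by_cases hc : (τ : ℕ) + 1 ≤ (t : ℕ) + 1
      · rw [if_pos hc, if_pos (by omega)]
      · rw [if_neg hc, if_neg (by omega)]
    have hTj : ((T' + 1 : ℕ) : ℝ) - (j : ℝ) ≠ 0 :=
      sub_ne_zero_of_ne (by exact_mod_cast hjT.ne')
    calc ∑ t : Fin (T' + 1), (C t τ) ^ 2
        = ∑ i ∈ Finset.range (T' + 1), (if j ≤ i then a ^ 2 else b ^ 2) := by
          simp only [h3]
          exact Fin.sum_univ_eq_sum_range (fun i => if j ≤ i then a ^ 2 else b ^ 2) (T' + 1)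
      _ = ∑ i ∈ Finset.Ico 0 j, (if j ≤ i then a ^ 2 else b ^ 2)
          + ∑ i ∈ Finset.Ico j (T' + 1), (if j ≤ i then a ^ 2 else b ^ 2) := by
          rw [Finset.range_eq_Ico, Finset.sum_Ico_consecutive _ (Nat.zero_le j) hjT.le]
      _ = (j : ℝ) * b ^ 2 + (((T' + 1 : ℕ) : ℝ) - (j : ℝ)) * a ^ 2 := by
          rw [Finset.sum_congr rfl (fun i hi => if_neg (by simp at hi; omega)),
            Finset.sum_congr rfl (fun i hi => if_pos (by simp at hi; omega)),
            Finset.sum_const, Finset.sum_const, Nat.card_Ico, Nat.card_Ico,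
            Nat.sub_zero, nsmul_eq_mul, nsmul_eq_mul, Nat.cast_sub hjT.le]
      _ = h j := by
          rw [ha, hb, hh]
          have e : ((T' + 1 : ℕ) : ℝ) - ((j : ℕ) + 1) + 1 = ((T' + 1 : ℕ) : ℝ) - j := by
            push_cast; ring
          rw [e]
          exact stmt_11_aux _ _ _ hT0 hTj
  have h4 : (C * Cᵀ).trace = ∑ i ∈ Finset.range T', h (i + 1) := by
    rw [h1]
    rw [Finset.sum_congr rfl (fun τ _ => h2 τ)]
    rw [Fin.sum_univ_eq_sum_range (fun i => h i) (T' + 1)]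
    rw [Finset.sum_range_succ' (fun i => h i) T']
    have : h 0 = 0 := by simp [hh]
    rw [this, add_zero]
  constructor
  · rw [h4, ← Finset.Ico_add_one_right_eq_Icc, Finset.sum_Ico_eq_sum_range]
    have hcard : T' + 1 + 1 - 2 = T' := by omega
    rw [hcard, Finset.mul_sum]
    refine Finset.sum_congr rfl fun i hi => ?_
    simp only [Finset.mem_range] at hi
    have e1 : T' + 1 - (i + 1 + 1) = T' + 1 - (2 + i) := by omega
    have hi' : (i : ℝ) < (T' : ℝ) := by exact_mod_cast hi
    simp only [hh, e1]
    push_cast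
    rw [one_div, inv_mul_eq_div, div_div,
      div_eq_div_iff (by intro hcon; rcases mul_eq_zero.mp hcon with hc | hc <;> linarith)
        (by intro hcon; rcases mul_eq_zero.mp hcon with hc | hc <;> linarith)]
    ring
  · rw [h4, Finset.mul_sum]
    have hc1 : T' + 1 - 1 = T' := by omega
    rw [hc1]
    rw [← Finset.sum_range_reflect
      (fun t => 1 / ((T' + 1 : ℕ) : ℝ) * (F t ^ 2 * (((T' + 1 : ℕ) : ℝ) - t - 1) / ((t : ℝ) + 1))) T']
    refine Finset.sum_congr rfl fun j hj => ?_
    simp only [Finset.mem_range] at hj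
    have e1 : T' + 1 - (j + 1 + 1) = T' - 1 - j := by omega
    have e2 : ((T' - 1 - j : ℕ) : ℝ) = (T' : ℝ) - 1 - j := by
      have : T' - 1 - j + (1 + j) = T' := by omega
      have := congrArg (Nat.cast : ℕ → ℝ) this
      push_cast at this
      linarith
    have hj' : (j : ℝ) < (T' : ℝ) := by exact_mod_cast hj
    simp only [hh, e1, e2]
    push_cast
    rw [one_div, inv_mul_eq_div, div_div,
      div_eq_div_iff (by intro hcon; rcases mul_eq_zero.mp hcon with hc | hc <;> linarith)
        (by intro hcon; rcases mul_eq_zero.mp hcon with hc | hc <;> linarith)]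
    ring
end

section
/- If the sequence F : ℕ → ℝ satisfies |F(t)| ≤ K(t+1)^{1/2-α} for some constants K > 0 and α ∈ (0, 1/2], then (1/T²) Σ_{t=0}^{T-1} F(t)² (T-t+1)/(t+1) → 0 as T → ∞. -/
open Finset Filter

theorem stmt_12 (F : ℕ → ℝ) (K α : ℝ) (hK : 0 < K) (hα : 0 < α) (hα' : α ≤ 1 / 2)
    (hF : ∀ t : ℕ, |F t| ≤ K * ((t : ℝ) + 1) ^ ((1 : ℝ) / 2 - α)) :
    Tendsto (fun T : ℕ =>
        (1 / (T : ℝ) ^ 2) * ∑ t ∈ Finset.range T,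
          F t ^ 2 * ((T : ℝ) - t + 1) / ((t : ℝ) + 1))
      atTop (nhds 0) := by
  set a : ℕ → ℝ := fun t => ((t : ℝ) + 1) ^ (-(2 * α)) with ha_def
  have ha : Tendsto a atTop (nhds 0) := by
    have h1 : Tendsto (fun t : ℕ => (t : ℝ) + 1) atTop atTop :=
      tendsto_atTop_add_const_right _ 1 tendsto_natCast_atTop_atTop
    exact (tendsto_rpow_neg_atTop (by linarith)).comp h1
  have hg : Tendsto (fun T : ℕ =>
      2 * K ^ 2 * ((T : ℝ)⁻¹ * ∑ t ∈ Finset.range T, a t)) atTop (nhds 0) := by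
    have := (ha.cesaro).const_mul (2 * K ^ 2)
    simpa using this
  apply tendsto_of_tendsto_of_tendsto_of_le_of_le' tendsto_const_nhds hg
  · filter_upwards [] with T
    apply mul_nonneg (by positivity)
    apply Finset.sum_nonneg
    intro t ht
    have h1 : (t : ℝ) < T := by exact_mod_cast Finset.mem_range.1 ht
    apply div_nonneg _ (by positivity)
    apply mul_nonneg (sq_nonneg _)
    linarith
  · filter_upwards [eventually_ge_atTop 1] with T hT
    have hT1 : (1 : ℝ) ≤ T := by exact_mod_cast hT
    have hTpos : (0 : ℝ) < T := by linarith
    have key : ∀ t ∈ Finset.range T,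
        F t ^ 2 * ((T : ℝ) - t + 1) / ((t : ℝ) + 1) ≤ K ^ 2 * ((T : ℝ) + 1) * a t := by
      intro t ht
      have htT : (t : ℝ) < T := by exact_mod_cast Finset.mem_range.1 ht
      have h0 : (0 : ℝ) < (t : ℝ) + 1 := by positivity
      have hF2 : F t ^ 2 ≤ K ^ 2 * ((t : ℝ) + 1) ^ (1 - 2 * α) := by
        have h := hF t
        have habs : F t ^ 2 = |F t| ^ 2 := (sq_abs _).symm
        rw [habs]
        calc |F t| ^ 2 ≤ (K * ((t : ℝ) + 1) ^ ((1 : ℝ) / 2 - α)) ^ 2 :=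
              pow_le_pow_left₀ (abs_nonneg _) h 2
          _ = K ^ 2 * (((t : ℝ) + 1) ^ ((1 : ℝ) / 2 - α) *
              ((t : ℝ) + 1) ^ ((1 : ℝ) / 2 - α)) := by ring
          _ = K ^ 2 * ((t : ℝ) + 1) ^ (1 - 2 * α) := by
              rw [← Real.rpow_add h0]; ring_nf
      have hfac : (T : ℝ) - t + 1 ≤ (T : ℝ) + 1 := by
        have : (0 : ℝ) ≤ (t : ℝ) := Nat.cast_nonneg t
        linarith
      have hTt : (0 : ℝ) ≤ (T : ℝ) - t + 1 := by linarith
      have hpow : a t = ((t : ℝ) + 1) ^ (1 - 2 * α) / ((t : ℝ) + 1) := by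
        have h2 := Real.rpow_sub h0 (1 - 2 * α) 1
        rw [Real.rpow_one, show (1 - 2 * α) - 1 = -(2 * α) by ring] at h2
        simpa [ha_def] using h2
      calc F t ^ 2 * ((T : ℝ) - t + 1) / ((t : ℝ) + 1)
          ≤ K ^ 2 * ((t : ℝ) + 1) ^ (1 - 2 * α) * ((T : ℝ) + 1) / ((t : ℝ) + 1) := by
            gcongr
        _ = K ^ 2 * ((T : ℝ) + 1) * (((t : ℝ) + 1) ^ (1 - 2 * α) / ((t : ℝ) + 1)) := by
            ring
        _ = K ^ 2 * ((T : ℝ) + 1) * a t := by rw [hpow]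
    have hS : (0 : ℝ) ≤ ∑ t ∈ Finset.range T, a t := by
      apply Finset.sum_nonneg
      intro t _
      exact Real.rpow_nonneg (by positivity) _
    calc (1 / (T : ℝ) ^ 2) * ∑ t ∈ Finset.range T,
          F t ^ 2 * ((T : ℝ) - t + 1) / ((t : ℝ) + 1)
        ≤ (1 / (T : ℝ) ^ 2) * ∑ t ∈ Finset.range T, K ^ 2 * ((T : ℝ) + 1) * a t :=
          mul_le_mul_of_nonneg_left (Finset.sum_le_sum key) (by positivity)
      _ = (K ^ 2 * ((T : ℝ) + 1) / (T : ℝ) ^ 2) * ∑ t ∈ Finset.range T, a t := by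
          rw [← Finset.mul_sum]; ring
      _ ≤ (2 * K ^ 2 * (T : ℝ)⁻¹) * ∑ t ∈ Finset.range T, a t := by
          apply mul_le_mul_of_nonneg_right _ hS
          rw [div_le_iff₀ (by positivity)]
          have h2 : 2 * K ^ 2 * (T : ℝ)⁻¹ * (T : ℝ) ^ 2 = 2 * K ^ 2 * (T : ℝ) := by
            field_simp
          rw [h2]
          nlinarith [sq_nonneg K]
      _ = 2 * K ^ 2 * ((T : ℝ)⁻¹ * ∑ t ∈ Finset.range T, a t) := by ring
end

section
/- For any positive integer T, (1/T²) Σ_{τ=1}^{T} Σ_{s=1}^{T} (min(τ,s)-1)/(T - min(τ,s) + 1) = 1 - (1/T) Σ_{k=1}^{T} 1/k. -/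
open Finset

lemma min_double_sum (g : ℕ → ℝ) : ∀ T : ℕ,
    ∑ τ ∈ Finset.Icc 1 T, ∑ s ∈ Finset.Icc 1 T, g (min τ s)
      = ∑ k ∈ Finset.Icc 1 T, (2 * ((T : ℝ) - k) + 1) * g k := by
  intro T
  induction T with
  | zero => simp
  | succ n ih =>
    have h1 : ∀ τ ∈ Finset.Icc 1 n,
        ∑ s ∈ Finset.Icc 1 (n+1), g (min τ s)
          = (∑ s ∈ Finset.Icc 1 n, g (min τ s)) + g τ := by
      intro τ hτ
      rw [Finset.sum_Icc_succ_top (by omega)]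
      simp only [Finset.mem_Icc] at hτ
      have : min τ (n+1) = τ := by omega
      rw [this]
    have h2 : ∑ s ∈ Finset.Icc 1 (n+1), g (min (n+1) s)
        = (∑ s ∈ Finset.Icc 1 n, g s) + g (n+1) := by
      rw [Finset.sum_Icc_succ_top (by omega)]
      congr 1
      · apply Finset.sum_congr rfl
        intro s hs
        simp only [Finset.mem_Icc] at hs
        congr 1
        omega
      · congr 1
        omega
    rw [Finset.sum_Icc_succ_top (by omega), Finset.sum_congr rfl h1, h2,
      Finset.sum_add_distrib, ih]
    conv_rhs => rw [Finset.sum_Icc_succ_top (show 1 ≤ n + 1 by omega)]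
    push_cast
    rw [show ∑ k ∈ Finset.Icc 1 n, (2 * ((n : ℝ) + 1 - k) + 1) * g k
        = ∑ k ∈ Finset.Icc 1 n, ((2 * ((n : ℝ) - k) + 1) * g k + 2 * g k) from
      Finset.sum_congr rfl (by intro k hk; ring)]
    rw [Finset.sum_add_distrib]
    ring_nf
    rw [show ∑ x ∈ Finset.Icc 1 n, g x * 2
        = ∑ x ∈ Finset.Icc 1 n, g x + ∑ x ∈ Finset.Icc 1 n, g x by
      rw [← Finset.sum_add_distrib]; apply Finset.sum_congr rfl; intros; ring]
    ring

lemma harm_reflect (T : ℕ) :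
    ∑ k ∈ Finset.Icc 1 T, (1 : ℝ) / ((T : ℝ) - k + 1)
      = ∑ k ∈ Finset.Icc 1 T, (1 : ℝ) / k := by
  apply Finset.sum_nbij' (i := fun k => T + 1 - k) (j := fun k => T + 1 - k)
  · intro a ha; simp only [Finset.mem_Icc] at *; omega
  · intro a ha; simp only [Finset.mem_Icc] at *; omega
  · intro a ha; simp only [Finset.mem_Icc] at *; omega
  · intro a ha; simp only [Finset.mem_Icc] at *; omega
  · intro a ha
    simp only [Finset.mem_Icc] at ha
    have : ((T + 1 - a : ℕ) : ℝ) = (T : ℝ) + 1 - a := by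
      have : a ≤ T + 1 := by omega
      push_cast [Nat.cast_sub this]
      ring
    rw [this]
    ring_nf

lemma gauss_like (T : ℕ) :
    ∑ k ∈ Finset.Icc 1 T, (2 * (k : ℝ) - 1) = (T : ℝ) ^ 2 := by
  induction T with
  | zero => simp
  | succ n ih =>
    rw [Finset.sum_Icc_succ_top (by omega), ih]
    push_cast
    ring

theorem stmt_19 (T : ℕ) (hT : 0 < T) :
    (1 / (T : ℝ) ^ 2) * ∑ τ ∈ Finset.Icc 1 T, ∑ s ∈ Finset.Icc 1 T,
        (((min τ s : ℕ) : ℝ) - 1) / ((T : ℝ) - (min τ s : ℕ) + 1)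
    = 1 - (1 / (T : ℝ)) * ∑ k ∈ Finset.Icc 1 T, (1 : ℝ) / k := by
  have key := min_double_sum (fun k => ((k : ℝ) - 1) / ((T : ℝ) - k + 1)) T
  rw [key]
  have hterm : ∀ k ∈ Finset.Icc 1 T,
      (2 * ((T : ℝ) - k) + 1) * (((k : ℝ) - 1) / ((T : ℝ) - k + 1))
        = (2 * (k : ℝ) - 1) - (T : ℝ) * (1 / ((T : ℝ) - k + 1)) := by
    intro k hk
    simp only [Finset.mem_Icc] at hk
    have hk' : (k : ℝ) ≤ T := by exact_mod_cast hk.2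
    have hd : (T : ℝ) - k + 1 ≠ 0 := by linarith
    field_simp
    ring
  rw [Finset.sum_congr rfl hterm, Finset.sum_sub_distrib, gauss_like,
    ← Finset.mul_sum, harm_reflect]
  have hT' : (T : ℝ) ≠ 0 := by positivity
  field_simp
end
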